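/- Let μ_j > 0, λ_j > 0 for j in a finite set J_i with Σ_{j∈J_i} λ_j/μ_j = 1. Fix nonnegative reals Q_j and q_j* with Σ_{j∈J_i}(Q_j − q_j*)/μ_j = 0, and partition J_i into J_i^> = {j : Q_j > q_j*} and J_i^≤ = {j : Q_j ≤ q_j*} with J_i^≤ nonempty. Then L ∈ ℝ₊ satisfies the fixed-point equation L = Σ_{j∈J_i} (λ_j L − q_j* + Q_j)⁺ / μ_j if and only if L ≥ max_{j∈J_i^≤} (q_j* − Q_j)/λ_j. -/

import Mathlib

theorem stmt4 {ι : Type*} [Fintype ι] [Nonempty ι]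
    (lam μ : ι → ℝ) (hlam : ∀ j, 0 < lam j) (hμ : ∀ j, 0 < μ j)
    (hρ : ∑ j, lam j / μ j = 1)
    (Q qs : ι → ℝ) (hQ : ∀ j, 0 ≤ Q j) (hqs : ∀ j, 0 ≤ qs j)
    (hcons : ∑ j, (Q j - qs j) / μ j = 0)
    (hle : ∃ j, Q j ≤ qs j) :
    ∀ L : ℝ, 0 ≤ L →
      ((L = ∑ j, max (lam j * L - qs j + Q j) 0 / μ j) ↔
        (∀ j, Q j ≤ qs j → (qs j - Q j) / lam j ≤ L)) := by
  intro L hL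
  set f : ι → ℝ := fun j => lam j * L - qs j + Q j with hf
  have hsum : ∑ j, f j / μ j = L := by
    have h1 : ∀ j, f j / μ j = L * (lam j / μ j) + (Q j - qs j) / μ j := by
      intro j
      have := (hμ j).ne'
      field_simp [hf]
      ring
    simp_rw [h1]
    rw [Finset.sum_add_distrib, ← Finset.mul_sum, hρ, hcons]
    ring
  constructor
  · intro hfix j hj
    have hzero : ∑ j, (max (f j) 0 - f j) / μ j = 0 := by
      simp_rw [sub_div]
      rw [Finset.sum_sub_distrib, hsum, ← hfix]
      ring
    have hnn : ∀ k ∈ Finset.univ, (0:ℝ) ≤ (max (f k) 0 - f k) / μ k := by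
      intro k _
      exact div_nonneg (by simp [le_max_left]) (hμ k).le
    have heach := (Finset.sum_eq_zero_iff_of_nonneg hnn).mp hzero j (Finset.mem_univ j)
    have hfj : 0 ≤ f j := by
      have hμne := (hμ j).ne'
      have : max (f j) 0 - f j = 0 := by
        rcases div_eq_zero_iff.mp heach with h | h
        · exact h
        · exact absurd h hμne
      have hmx : max (f j) 0 = f j := by linarith
      have := le_max_right (f j) 0
      linarith [hmx ▸ this]
    rw [div_le_iff₀ (hlam j)]
    simp only [hf] at hfj
    linarith
  · intro hge
    have hfnn : ∀ j, 0 ≤ f j := by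
      intro j
      by_cases hc : Q j ≤ qs j
      · have := hge j hc
        rw [div_le_iff₀ (hlam j)] at this
        simp only [hf]; linarith
      · push_neg at hc
        have : 0 ≤ lam j * L := mul_nonneg (hlam j).le hL
        simp only [hf]; linarith
    have : ∀ j, max (f j) 0 = f j := fun j => max_eq_left (hfnn j)
    simp_rw [this] at *
    change L = ∑ j, max (f j) 0 / μ j
    exact hsum.symm.trans (Finset.sum_congr rfl fun j _ => by rw [max_eq_left (hfnn j)])
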